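/- Let 0 < δ < 1/(4√n) and let τ be a product distribution over {0,1}ⁿ such that |Pr_τ[xᵢ = 1] − 1/2| > δ for every i ∈ [n]. Then for all sufficiently large n, d_TV(τ, πₙ) ≥ δ√n/16, where πₙ is the uniform distribution on {0,1}ⁿ. -/

import Mathlib

set_option maxHeartbeats 1000000

/-- The product distribution over `{0,1}ⁿ` with marginal probabilities `p i` of drawing 1. -/
noncomputable def prodDist (n : ℕ) (p : Fin n → ℝ) : (Fin n → Bool) → ℝ :=
  fun y => ∏ i, if y i then p i else 1 - p i

open Finset

namespace Stmt14

/-- number of `true` coordinates -/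
def cnt {n : ℕ} (y : Fin n → Bool) : ℕ := (univ.filter fun i => y i = true).card

lemma cnt_le {n : ℕ} (y : Fin n → Bool) : cnt y ≤ n := by
  have := Finset.card_filter_le (univ : Finset (Fin n)) (fun i => y i = true)
  simpa [cnt] using this

lemma sum_prodDist {n : ℕ} (p : Fin n → ℝ) :
    ∑ y : Fin n → Bool, prodDist n p y = 1 := by
  classical
  unfold prodDist
  rw [← Fintype.prod_sum (f := fun (i : Fin n) (b : Bool) => if b then p i else 1 - p i)]
  simp

lemma card_cnt (n s : ℕ) :
    ((univ : Finset (Fin n → Bool)).filter fun y => cnt y = s).card = n.choose s := by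
  classical
  have hpc := Finset.card_powersetCard s (univ : Finset (Fin n))
  rw [Finset.card_univ, Fintype.card_fin] at hpc
  rw [← hpc]
  refine Finset.card_nbij' (fun y => univ.filter fun i => y i = true)
      (fun S => fun i => decide (i ∈ S)) ?_ ?_ ?_ ?_
  · intro y hy
    simp only [Finset.mem_coe, Finset.mem_filter, Finset.mem_univ, true_and] at hy
    rw [Finset.mem_coe, Finset.mem_powersetCard]
    exact ⟨Finset.subset_univ _, hy⟩
  · intro S hS
    rw [Finset.mem_coe, Finset.mem_powersetCard] at hS
    simp only [Finset.mem_coe, Finset.mem_filter, Finset.mem_univ, true_and]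
    have : (univ.filter fun i => decide (i ∈ S) = true) = S := by
      ext i; simp
    simp only [cnt, this, hS.2]
  · intro y hy
    funext i
    simp
  · intro S hS
    ext i
    simp

lemma sum_cnt (n t : ℕ) (w : ℕ → ℝ) :
    ∑ y ∈ (univ : Finset (Fin n → Bool)).filter (fun y => t ≤ cnt y), w (cnt y)
      = ∑ s ∈ Icc t n, (n.choose s : ℝ) * w s := by
  classical
  have hmaps : ∀ y ∈ (univ : Finset (Fin n → Bool)).filter (fun y => t ≤ cnt y),
      cnt y ∈ Icc t n := by
    intro y hy
    simp only [Finset.mem_filter] at hy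
    exact Finset.mem_Icc.mpr ⟨hy.2, cnt_le y⟩
  rw [← Finset.sum_fiberwise_of_maps_to hmaps (fun y => w (cnt y))]
  apply Finset.sum_congr rfl
  intro s hs
  have hts : t ≤ s := (Finset.mem_Icc.mp hs).1
  have hfe : (((univ : Finset (Fin n → Bool)).filter fun y => t ≤ cnt y).filter
      fun y => cnt y = s) = (univ : Finset (Fin n → Bool)).filter fun y => cnt y = s := by
    rw [Finset.filter_filter]
    apply Finset.filter_congr
    intro y _
    constructor
    · exact fun h => h.2
    · exact fun h => ⟨h ▸ hts, h⟩
  rw [hfe]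
  calc ∑ y ∈ (univ : Finset (Fin n → Bool)).filter (fun y => cnt y = s), w (cnt y)
      = ∑ _y ∈ (univ : Finset (Fin n → Bool)).filter (fun y => cnt y = s), w s :=
        Finset.sum_congr rfl (fun y hy => by rw [(Finset.mem_filter.mp hy).2])
    _ = (n.choose s : ℝ) * w s := by rw [Finset.sum_const, card_cnt, nsmul_eq_mul]

lemma prodDist_const {n : ℕ} (q : ℝ) (y : Fin n → Bool) :
    prodDist n (fun _ => q) y = q ^ cnt y * (1 - q) ^ (n - cnt y) := by
  classical
  unfold prodDist
  rw [← Finset.prod_filter_mul_prod_filter_not univ (fun i => y i = true)]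
  have h1 : ∀ i ∈ univ.filter (fun i : Fin n => y i = true),
      (if y i then q else 1 - q) = q := by
    intro i hi; simp only [Finset.mem_filter] at hi; simp [hi.2]
  have h2 : ∀ i ∈ univ.filter (fun i : Fin n => ¬ y i = true),
      (if y i then q else 1 - q) = 1 - q := by
    intro i hi; simp only [Finset.mem_filter] at hi; simp [hi.2]
  rw [Finset.prod_congr rfl h1, Finset.prod_congr rfl h2, Finset.prod_const,
    Finset.prod_const]
  have hcard : (univ.filter fun i : Fin n => ¬ y i = true).card = n - cnt y := by
    have := Finset.card_filter_add_card_filter_not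
      (s := (univ : Finset (Fin n))) (p := fun i => y i = true)
    rw [Finset.card_univ, Fintype.card_fin] at this
    simp only [cnt] at *
    omega
  rw [hcard]
  rfl


lemma mono_step {n : ℕ} (A : Finset (Fin n → Bool))
    (hA : ∀ y ∈ A, ∀ k, Function.update y k true ∈ A)
    (f g : Fin n → ℝ) (k : Fin n)
    (hfg : ∀ i, i ≠ k → f i = g i)
    (hf0 : ∀ i, 0 ≤ f i) (hf1 : ∀ i, f i ≤ 1)
    (hk : f k ≤ g k) :
    ∑ y ∈ A, prodDist n f y ≤ ∑ y ∈ A, prodDist n g y := by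
  classical
  set W : (Fin n → Bool) → ℝ :=
    fun y => ∏ i ∈ univ.erase k, (if y i then f i else 1 - f i) with hW
  have hWnn : ∀ y, 0 ≤ W y := by
    intro y
    apply Finset.prod_nonneg
    intro i _
    by_cases h : y i = true
    · simp [h]; exact hf0 i
    · simp [h]; linarith [hf1 i]
  have hprodf : ∀ y, prodDist n f y = (if y k then f k else 1 - f k) * W y := by
    intro y
    rw [prodDist, ← Finset.mul_prod_erase _ _ (Finset.mem_univ k)]
  have hprodg : ∀ y, prodDist n g y = (if y k then g k else 1 - g k) * W y := by
    intro y
    rw [prodDist, ← Finset.mul_prod_erase _ _ (Finset.mem_univ k)]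
    congr 1
    apply Finset.prod_congr rfl
    intro i hi
    rw [hfg i (Finset.ne_of_mem_erase hi)]
  set A1 := A.filter (fun y => y k = true) with hA1
  set A0 := A.filter (fun y => ¬ y k = true) with hA0
  have hsum : ∀ h : Fin n → ℝ, (∀ y, prodDist n h y = (if y k then h k else 1 - h k) * W y) →
      ∑ y ∈ A, prodDist n h y = h k * ∑ y ∈ A1, W y + (1 - h k) * ∑ y ∈ A0, W y := by
    intro h hh
    rw [← Finset.sum_filter_add_sum_filter_not A (fun y => y k = true)]
    congr 1
    · rw [Finset.mul_sum]
      apply Finset.sum_congr rfl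
      intro y hy
      rw [hh y, (Finset.mem_filter.mp hy).2]
      simp
    · rw [Finset.mul_sum]
      apply Finset.sum_congr rfl
      intro y hy
      rw [hh y]
      have := (Finset.mem_filter.mp hy).2
      simp only [Bool.not_eq_true] at this
      rw [this]
      simp
  have hC01 : ∑ y ∈ A0, W y ≤ ∑ y ∈ A1, W y := by
    have himg : ∀ y ∈ A0, Function.update y k true ∈ A1 := by
      intro y hy
      rw [Finset.mem_filter]
      exact ⟨hA y (Finset.mem_filter.mp hy).1 k, Function.update_self k true y⟩
    have hinj : ∀ y ∈ A0, ∀ z ∈ A0, Function.update y k true = Function.update z k true → y = z := by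
      intro y hy z hz h
      have hyk := (Finset.mem_filter.mp hy).2
      have hzk := (Finset.mem_filter.mp hz).2
      funext i
      by_cases hik : i = k
      · subst hik
        simp only [Bool.not_eq_true] at hyk hzk
        rw [hyk, hzk]
      · have := congrFun h i
        rwa [Function.update_of_ne hik, Function.update_of_ne hik] at this
    have hWupd : ∀ y, W (Function.update y k true) = W y := by
      intro y
      apply Finset.prod_congr rfl
      intro i hi
      rw [Function.update_of_ne (Finset.ne_of_mem_erase hi)]
    calc ∑ y ∈ A0, W y = ∑ y ∈ A0, W (Function.update y k true) := by
          exact Finset.sum_congr rfl (fun y _ => (hWupd y).symm)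
      _ = ∑ z ∈ A0.image (fun y => Function.update y k true), W z :=
          (Finset.sum_image hinj).symm
      _ ≤ ∑ y ∈ A1, W y := by
          apply Finset.sum_le_sum_of_subset_of_nonneg
          · intro z hz
            obtain ⟨y, hy, rfl⟩ := Finset.mem_image.mp hz
            exact himg y hy
          · intro y _ _
            exact hWnn y
  rw [hsum f hprodf, hsum g hprodg]
  have hfgk : f k ≤ g k := hk
  nlinarith [hC01, hWnn]

lemma mono {n : ℕ} (A : Finset (Fin n → Bool))
    (hA : ∀ y ∈ A, ∀ k, Function.update y k true ∈ A)
    (f g : Fin n → ℝ) (hle : ∀ i, f i ≤ g i)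
    (hf0 : ∀ i, 0 ≤ f i) (hg1 : ∀ i, g i ≤ 1) :
    ∑ y ∈ A, prodDist n f y ≤ ∑ y ∈ A, prodDist n g y := by
  classical
  have key : ∀ T : Finset (Fin n),
      ∑ y ∈ A, prodDist n f y ≤ ∑ y ∈ A, prodDist n (fun i => if i ∈ T then g i else f i) y := by
    intro T
    induction T using Finset.induction_on with
    | empty => simp
    | @insert k T hkT ih =>
      refine le_trans ih ?_
      apply mono_step A hA _ _ k
      · intro i hik
        simp only [Finset.mem_insert]
        by_cases h : i ∈ T
        · simp [h]
        · simp [h, hik]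
      · intro i
        by_cases h : i ∈ T
        · simp only [h, if_true]; linarith [hle i, hf0 i]
        · simp only [h, if_false]; exact hf0 i
      · intro i
        by_cases h : i ∈ T
        · simp only [h, if_true]; exact hg1 i
        · simp only [h, if_false]; linarith [hle i, hg1 i]
      · simp [hkT]
        exact hle k
  have := key univ
  simpa using this


lemma choose_mul_nat (n s : ℕ) (hs1 : 1 ≤ s) (hsn : s ≤ n) :
    n.choose s * s = n * (n-1).choose (s-1) := by
  have h := Nat.add_one_mul_choose_eq (n-1) (s-1)
  have hn1 : n - 1 + 1 = n := by omega
  have hs1' : s - 1 + 1 = s := by omega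
  simp only [Nat.succ_eq_add_one, hn1, hs1'] at h
  omega

lemma choose_mul_nat' (n s : ℕ) (hn1 : 1 ≤ n) (hsn : s ≤ n) :
    n.choose s * (n - s) = n * (n-1).choose s := by
  rcases Nat.eq_or_lt_of_le hsn with h | h
  · subst h
    rw [Nat.sub_self, Nat.mul_zero, Nat.choose_eq_zero_of_lt (by omega : s - 1 < s), Nat.mul_zero]
  · have h1 : n.choose s = n.choose (n - s) := (Nat.choose_symm hsn).symm
    have h2 := choose_mul_nat n (n - s) (by omega) (by omega)
    have h3 : (n - 1).choose (n - s - 1) = (n - 1).choose s := by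
      have : n - s - 1 = (n - 1) - s := by omega
      rw [this]
      exact Nat.choose_symm (by omega)
    rw [h1, h2, h3]

noncomputable def phi (n : ℕ) (x : ℝ) (s : ℕ) : ℝ :=
  (n : ℝ) * ((n-1).choose (s-1) : ℝ) * (x ^ (s-1) * (1 - x) ^ (n - s))

lemma hasDerivF (n t : ℕ) (ht : 1 ≤ t) (htn : t ≤ n) (x : ℝ) :
    HasDerivAt (fun x : ℝ => ∑ s ∈ Icc t n, (n.choose s : ℝ) * (x ^ s * (1 - x) ^ (n - s)))
      (phi n x t) x := by
  classical
  have hterm : ∀ s ∈ Icc t n,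
      HasDerivAt (fun x : ℝ => (n.choose s : ℝ) * (x ^ s * (1 - x) ^ (n - s)))
        (phi n x s - phi n x (s+1)) x := by
    intro s hs
    obtain ⟨hs1, hs2⟩ := Finset.mem_Icc.mp hs
    have hs1' : 1 ≤ s := le_trans ht hs1
    have h1 : HasDerivAt (fun x : ℝ => x ^ s) ((s : ℝ) * x ^ (s-1)) x := hasDerivAt_pow s x
    have h2 : HasDerivAt (fun x : ℝ => (1 - x) ^ (n - s))
        (((n - s : ℕ) : ℝ) * (1 - x) ^ (n - s - 1) * (-1)) x := by
      have hin : HasDerivAt (fun x : ℝ => 1 - x) (-1) x := (hasDerivAt_id x).const_sub 1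
      exact hin.pow (n - s)
    have h3 := (h1.mul h2).const_mul ((n.choose s : ℕ) : ℝ)
    convert h3 using 1
    · rfl
    · rfl
    · rfl
    have id1 : ((n.choose s : ℕ) : ℝ) * (s : ℝ) = (n : ℝ) * ((n-1).choose (s-1) : ℝ) := by
      exact_mod_cast congrArg (Nat.cast : ℕ → ℝ) (choose_mul_nat n s hs1' hs2)
    have id2 : ((n.choose s : ℕ) : ℝ) * ((n - s : ℕ) : ℝ) = (n : ℝ) * ((n-1).choose s : ℝ) := by
      exact_mod_cast congrArg (Nat.cast : ℕ → ℝ) (choose_mul_nat' n s (le_trans ht htn) hs2)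
    have e1 : n - (s + 1) = n - s - 1 := by omega
    have e2 : (s + 1) - 1 = s := by omega
    simp only [phi, e1, e2]
    linear_combination (x ^ s * (1 - x) ^ (n - s - 1)) * id2
      - (x ^ (s-1) * (1 - x) ^ (n - s)) * id1
  have hsum := HasDerivAt.fun_sum hterm
  have htel : ∑ s ∈ Icc t n, (phi n x s - phi n x (s+1)) = phi n x t := by
    rw [← Finset.Ico_add_one_right_eq_Icc, Finset.sum_Ico_eq_sum_range]
    simp only [Nat.add_assoc]
    rw [Finset.sum_range_sub' (fun j => phi n x (t + j))]
    have h1 : t + (n + 1 - t) = n + 1 := by omega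
    have h2 : phi n x (n+1) = 0 := by
      simp only [phi]
      rw [show (n+1) - 1 = n from rfl, Nat.choose_eq_zero_of_lt (by omega : n - 1 < n)]
      simp
    rw [h1, h2]
    simp [phi]
  rw [htel] at hsum
  exact hsum


lemma cb_lower (k : ℕ) (hk : 1 ≤ k) :
    (4:ℝ)^k ≤ (Nat.centralBinom k : ℝ) * (2 * Real.sqrt k) := by
  induction k, hk using Nat.le_induction with
  | base =>
    rw [show Nat.centralBinom 1 = 2 from rfl]
    simp [Real.sqrt_one]
    norm_num
  | succ k hk ih =>
    have hcb := Nat.succ_mul_centralBinom_succ k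
    have hcbR : ((k:ℝ)+1) * (Nat.centralBinom (k+1) : ℝ)
        = 2*(2*(k:ℝ)+1) * (Nat.centralBinom k : ℝ) := by
      push_cast [hcb]
      exact_mod_cast congrArg (Nat.cast : ℕ → ℝ) hcb
    have hs : Real.sqrt k ^ 2 = k := Real.sq_sqrt (by positivity)
    have ht : Real.sqrt ((k:ℝ)+1) ^ 2 = (k:ℝ)+1 := Real.sq_sqrt (by positivity)
    have hsn : 0 ≤ Real.sqrt k := Real.sqrt_nonneg _
    have htn : 0 ≤ Real.sqrt ((k:ℝ)+1) := Real.sqrt_nonneg _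
    have hk1 : (1:ℝ) ≤ k := by exact_mod_cast hk
    have hsqrt : 2*((k:ℝ)+1) * Real.sqrt k ≤ (2*(k:ℝ)+1) * Real.sqrt ((k:ℝ)+1) := by
      have h2 : (2*((k:ℝ)+1) * Real.sqrt k)^2 ≤ ((2*(k:ℝ)+1) * Real.sqrt ((k:ℝ)+1))^2 := by
        simp only [mul_pow, hs, ht]
        nlinarith
      have h3 := Real.sqrt_le_sqrt h2
      rwa [Real.sqrt_sq (by positivity), Real.sqrt_sq (by positivity)] at h3
    have hcbpos : (0:ℝ) < (Nat.centralBinom k : ℝ) := by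
      exact_mod_cast Nat.centralBinom_pos k
    have hcb1n : (0:ℝ) ≤ (Nat.centralBinom (k+1) : ℝ) := by positivity
    have h5 : (Nat.centralBinom k : ℝ) * (2*((k:ℝ)+1) * Real.sqrt k)
        ≤ (Nat.centralBinom k : ℝ) * ((2*(k:ℝ)+1) * Real.sqrt ((k:ℝ)+1)) :=
      mul_le_mul_of_nonneg_left hsqrt hcbpos.le
    have hgoal4 : (4:ℝ)^(k+1) = 4 * 4^k := by ring
    have hkpos : (0:ℝ) < (k:ℝ) + 1 := by positivity
    rw [hgoal4]
    push_cast
    nlinarith [ih, h5, hcbR, mul_le_mul_of_nonneg_left ih (le_of_lt hkpos), htn, hcbpos]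

lemma choose_half (n : ℕ) (hn : 2 ≤ n) :
    (2:ℝ)^(n-1) / (2 * Real.sqrt n) ≤ ((n-1).choose (n/2) : ℝ) := by
  have hsn : (0:ℝ) < Real.sqrt n := Real.sqrt_pos.mpr (by positivity)
  rcases Nat.even_or_odd n with ⟨k, hke⟩ | ⟨k, hko⟩
  · -- n = k + k, k ≥ 1
    have hk1 : 1 ≤ k := by omega
    have hch2 : 2 * (n-1).choose (n/2) = Nat.centralBinom k := by
      have hd : n / 2 = k := by omega
      have h1 : n - 1 = 2*k - 1 := by omega
      have hcs : Nat.centralBinom k = (2*k-1).choose (k-1) + (2*k-1).choose k := by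
        rw [Nat.centralBinom]
        rw [show 2*k = (2*k-1)+1 by omega, show k = (k-1)+1 by omega]
        rw [Nat.choose_succ_succ]
        congr 1 <;> congr 1 <;> omega
      have hsym : (2*k-1).choose (k-1) = (2*k-1).choose k := by
        rw [show k - 1 = (2*k-1) - k by omega]
        exact Nat.choose_symm (by omega)
      rw [hd, h1, hcs, hsym]
      omega
    have hcbl := cb_lower k hk1
    have hmono : Real.sqrt (k:ℝ) ≤ Real.sqrt n := Real.sqrt_le_sqrt (by
      have : (k:ℝ) ≤ n := by exact_mod_cast (by omega : k ≤ n)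
      exact this)
    -- 4^k ≤ cb k * 2 √k ≤ cb k * 2 √n = 2 * choose * 2√n
    have hcbn : (Nat.centralBinom k : ℝ) * (2 * Real.sqrt k)
        ≤ (Nat.centralBinom k : ℝ) * (2 * Real.sqrt n) := by
      apply mul_le_mul_of_nonneg_left (by linarith) (by positivity)
    have hchR : (2:ℝ) * ((n-1).choose (n/2) : ℝ) = (Nat.centralBinom k : ℝ) := by
      exact_mod_cast congrArg (Nat.cast : ℕ → ℝ) hch2
    have hpow : (4:ℝ)^k = 2 * 2^(n-1) := by
      rw [show (4:ℝ) = 2^2 by norm_num, ← pow_mul]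
      rw [show 2*k = (n-1)+1 by omega, pow_succ]
      ring
    rw [div_le_iff₀ (by positivity)]
    nlinarith [hcbl, hcbn, hchR, hpow]
  · -- n = 2k+1, k ≥ 1
    have hk1 : 1 ≤ k := by omega
    have hd : n / 2 = k := by omega
    have h1 : n - 1 = 2*k := by omega
    have hcbl := cb_lower k hk1
    have hmono : Real.sqrt (k:ℝ) ≤ Real.sqrt n := Real.sqrt_le_sqrt (by
      exact_mod_cast (by omega : k ≤ n))
    have hcbn : (Nat.centralBinom k : ℝ) * (2 * Real.sqrt k)
        ≤ (Nat.centralBinom k : ℝ) * (2 * Real.sqrt n) := by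
      apply mul_le_mul_of_nonneg_left (by linarith) (by positivity)
    have hch : ((n-1).choose (n/2) : ℝ) = (Nat.centralBinom k : ℝ) := by
      rw [hd, h1]
      rfl
    have hpow : (4:ℝ)^k = 2^(n-1) := by
      rw [show (4:ℝ) = 2^2 by norm_num, ← pow_mul]
      congr 1
      omega
    rw [div_le_iff₀ (by positivity), hch, ← hpow]
    linarith

end Stmt14

open Stmt14 in
theorem stmt_14 (n : ℕ) (hn : 70 ≤ n) (δ : ℝ) (p : Fin n → ℝ)
    (hδ0 : 0 < δ) (hδ1 : δ < 1 / (4 * Real.sqrt n))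
    (hp : ∀ i, 0 ≤ p i ∧ p i ≤ 1)
    (hbias : ∀ i, δ < |p i - 1 / 2|) :
    (1 / 2) * ∑ y, |prodDist n p y - (1 / 2 : ℝ) ^ n| ≥ δ * Real.sqrt n / 16 := by
  classical
  have hn0 : (0:ℝ) < n := by
    have : (70:ℝ) ≤ n := by exact_mod_cast hn
    linarith
  have hsn : (0:ℝ) < Real.sqrt n := Real.sqrt_pos.mpr hn0
  have h4s : (0:ℝ) < 4 * Real.sqrt n := by positivity
  have h8 : (8:ℝ) ≤ Real.sqrt n := by
    have h64 : (64:ℝ) ≤ n := by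
      have : (70:ℝ) ≤ n := by exact_mod_cast hn
      linarith
    nlinarith [Real.sq_sqrt hn0.le, hsn]
  have hδ32 : δ < 1/32 := by
    have := hδ1
    have h2 : 1/(4*Real.sqrt n) ≤ 1/32 := by
      apply one_div_le_one_div_of_le (by norm_num)
      linarith
    linarith
  -- flipped probabilities
  set P : Fin n → ℝ := fun i => if 1/2 ≤ p i then p i else 1 - p i with hPdef
  have hP1 : ∀ i, P i ≤ 1 := by
    intro i
    simp only [hPdef]
    by_cases h : (1:ℝ)/2 ≤ p i
    · simp only [h, if_true]; exact (hp i).2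
    · simp only [h, if_false]; linarith [(hp i).1]
  have hPq : ∀ i, 1/2 + δ ≤ P i := by
    intro i
    have hb := hbias i
    simp only [hPdef]
    by_cases h : (1:ℝ)/2 ≤ p i
    · simp only [h, if_true]
      rw [abs_of_nonneg (by linarith)] at hb
      linarith
    · simp only [h, if_false]
      rw [abs_of_nonpos (by linarith)] at hb
      linarith
  -- Step 1 : flip coordinates
  have hinv : Function.Involutive
      (fun (y : Fin n → Bool) => (fun i => if 1/2 ≤ p i then y i else !(y i))) := by
    intro y
    funext i
    by_cases h : (1:ℝ)/2 ≤ p i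
    · simp only [if_pos h]
    · simp only [if_neg h, Bool.not_not]
  set e : Equiv.Perm (Fin n → Bool) := hinv.toPerm _ with hedef
  have hflip : ∑ y : Fin n → Bool, |prodDist n p y - (1/2:ℝ)^n|
      = ∑ y : Fin n → Bool, |prodDist n P y - (1/2:ℝ)^n| := by
    rw [← Equiv.sum_comp e (fun y => |prodDist n P y - (1/2:ℝ)^n|)]
    apply Finset.sum_congr rfl
    intro y _
    have hey : prodDist n P (e y) = prodDist n p y := by
      have hcoe : e y = fun i => if 1/2 ≤ p i then y i else !(y i) := by
        simp [hedef, Function.Involutive.coe_toPerm]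
      rw [hcoe]
      unfold prodDist
      apply Finset.prod_congr rfl
      intro i _
      simp only [hPdef]
      by_cases h : (1:ℝ)/2 ≤ p i
      · simp only [if_pos h]
      · rw [if_neg h, if_neg h]
        by_cases hy : y i = true
        · simp only [hy, Bool.not_true, Bool.false_eq_true, if_false, if_true, sub_sub_cancel]
        · simp only [Bool.not_eq_true] at hy
          simp only [hy, Bool.not_false, Bool.false_eq_true, if_false, if_true]
    rw [hey]
  obtain ⟨t, htdef⟩ : ∃ t : ℕ, t = n / 2 + 1 := ⟨_, rfl⟩
  have ht1 : 1 ≤ t := by omega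
  have htn : t ≤ n := by omega
  set A : Finset (Fin n → Bool) := univ.filter (fun y => t ≤ cnt y) with hAdef
  have hA : ∀ y ∈ A, ∀ k, Function.update y k true ∈ A := by
    intro y hy k
    rw [hAdef, Finset.mem_filter] at hy ⊢
    refine ⟨Finset.mem_univ _, le_trans hy.2 ?_⟩
    simp only [cnt]
    apply Finset.card_le_card
    intro i hi
    rw [Finset.mem_filter] at hi ⊢
    refine ⟨Finset.mem_univ _, ?_⟩
    by_cases hik : i = k
    · subst hik; simp
    · rw [Function.update_of_ne hik]; exact hi.2
  -- sum of deviations is zero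
  have hsum0 : ∑ y : Fin n → Bool, (prodDist n P y - (1/2:ℝ)^n) = 0 := by
    rw [Finset.sum_sub_distrib, sum_prodDist]
    have hc : ∑ _y : Fin n → Bool, ((1:ℝ)/2)^n = (2^n : ℝ) * (1/2)^n := by
      rw [Finset.sum_const, Finset.card_univ]
      simp [nsmul_eq_mul]
    rw [hc, ← mul_pow]
    norm_num
  -- half L1 ≥ signed sum over A
  have hhalf : ∑ y ∈ A, (prodDist n P y - (1/2:ℝ)^n)
      ≤ (1/2) * ∑ y : Fin n → Bool, |prodDist n P y - (1/2:ℝ)^n| := by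
    have h1 : ∑ y ∈ A, (prodDist n P y - (1/2:ℝ)^n)
        ≤ ∑ y ∈ A, |prodDist n P y - (1/2:ℝ)^n| :=
      Finset.sum_le_sum (fun y _ => le_abs_self _)
    have h2 : ∑ y ∈ univ.filter (fun y => ¬ (t ≤ cnt y)), -(prodDist n P y - (1/2:ℝ)^n)
        ≤ ∑ y ∈ univ.filter (fun y => ¬ (t ≤ cnt y)), |prodDist n P y - (1/2:ℝ)^n| :=
      Finset.sum_le_sum (fun y _ => neg_le_abs _)
    have h3 : ∑ y ∈ A, (prodDist n P y - (1/2:ℝ)^n)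
        + ∑ y ∈ univ.filter (fun y => ¬ (t ≤ cnt y)), (prodDist n P y - (1/2:ℝ)^n) = 0 := by
      rw [hAdef, Finset.sum_filter_add_sum_filter_not]
      exact hsum0
    have h4 : ∑ y : Fin n → Bool, |prodDist n P y - (1/2:ℝ)^n|
        = ∑ y ∈ A, |prodDist n P y - (1/2:ℝ)^n|
          + ∑ y ∈ univ.filter (fun y => ¬ (t ≤ cnt y)), |prodDist n P y - (1/2:ℝ)^n| := by
      rw [hAdef, Finset.sum_filter_add_sum_filter_not]
    rw [Finset.sum_neg_distrib] at h2
    linarith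
  -- monotonicity
  have hmono : ∑ y ∈ A, prodDist n (fun _ => 1/2 + δ) y ≤ ∑ y ∈ A, prodDist n P y :=
    mono A hA _ P (fun i => hPq i) (fun i => by linarith) hP1
  -- identify with binomial sums
  set F : ℝ → ℝ := fun x => ∑ s ∈ Icc t n, (n.choose s : ℝ) * (x ^ s * (1 - x) ^ (n - s))
    with hFdef
  have hFq : ∑ y ∈ A, prodDist n (fun _ => (1:ℝ)/2 + δ) y = F (1/2 + δ) := by
    rw [hAdef]
    calc ∑ y ∈ univ.filter (fun y => t ≤ cnt y), prodDist n (fun _ => (1:ℝ)/2 + δ) y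
        = ∑ y ∈ univ.filter (fun y => t ≤ cnt y),
            ((1/2 + δ) ^ cnt y * (1 - (1/2 + δ)) ^ (n - cnt y)) :=
          Finset.sum_congr rfl (fun y _ => prodDist_const _ y)
      _ = ∑ s ∈ Icc t n, (n.choose s : ℝ) * ((1/2 + δ) ^ s * (1 - (1/2 + δ)) ^ (n - s)) :=
          sum_cnt n t (fun s => (1/2 + δ) ^ s * (1 - (1/2 + δ)) ^ (n - s))
      _ = F (1/2 + δ) := rfl
  have hFhalf : ∑ y ∈ A, ((1:ℝ)/2)^n = F (1/2) := by
    rw [hAdef]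
    calc ∑ y ∈ univ.filter (fun y => t ≤ cnt y), ((1:ℝ)/2)^n
        = ∑ s ∈ Icc t n, (n.choose s : ℝ) * ((1:ℝ)/2)^n :=
          sum_cnt n t (fun _ => ((1:ℝ)/2)^n)
      _ = F (1/2) := by
          apply Finset.sum_congr rfl
          intro s hs
          have hsn' : s ≤ n := (Finset.mem_Icc.mp hs).2
          rw [show (1:ℝ) - 1/2 = 1/2 by norm_num, ← pow_add, Nat.add_sub_cancel' hsn']
  -- mean value theorem
  have hab : (1:ℝ)/2 < 1/2 + δ := by linarith
  have hcont : ContinuousOn F (Set.Icc (1/2) (1/2 + δ)) := by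
    intro x _
    exact ((hasDerivF n t ht1 htn x).continuousAt).continuousWithinAt
  obtain ⟨ξ, hξ, hslope⟩ := exists_hasDerivAt_eq_slope F (fun x => phi n x t) hab hcont
    (fun x _ => hasDerivF n t ht1 htn x)
  have hFdiff : F (1/2 + δ) - F (1/2) = δ * phi n ξ t := by
    rw [eq_div_iff (by linarith : (1:ℝ)/2 + δ - 1/2 ≠ 0)] at hslope
    have he : (1:ℝ)/2 + δ - 1/2 = δ := by ring
    rw [he] at hslope
    linarith [hslope]
  obtain ⟨hξ1, hξ2⟩ := hξ
  obtain ⟨u, hudef⟩ : ∃ u : ℝ, u = ξ - 1/2 := ⟨_, rfl⟩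
  have hu0 : 0 < u := by rw [hudef]; linarith
  have huδ : u < δ := by rw [hudef]; linarith
  have hξval : ξ = (1 + 2*u)/2 := by rw [hudef]; ring
  have h1ξ : 1 - ξ = (1 - 2*u)/2 := by rw [hudef]; ring
  have hab' : (t - 1) + (n - t) = n - 1 := by omega
  have hba : n - t ≤ t - 1 := by omega
  have h2u1 : (0:ℝ) ≤ 1 - 2*u := by linarith
  have h2u0 : (1:ℝ) ≤ 1 + 2*u := by linarith
  have hB1 : (1+2*u)^(n-t) ≤ (1+2*u)^(t-1) := pow_le_pow_right₀ h2u0 hba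
  have hBnn : (0:ℝ) ≤ (1-2*u)^(n-t) := by positivity
  have hB2 : ((1+2*u)*(1-2*u))^(n-t) ≤ (1+2*u)^(t-1) * (1-2*u)^(n-t) := by
    rw [mul_pow]
    exact mul_le_mul_of_nonneg_right hB1 hBnn
  have hB3 : (1 : ℝ) + ((n-t : ℕ) : ℝ) * (-(4*u^2)) ≤ ((1+2*u)*(1-2*u))^(n-t) := by
    have hber := one_add_mul_le_pow (by nlinarith : (-2:ℝ) ≤ -(4*u^2)) (n-t)
    have : ((1:ℝ) + -(4*u^2)) = (1+2*u)*(1-2*u) := by ring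
    rwa [this] at hber
  have hδsq : 16 * (n:ℝ) * δ^2 < 1 := by
    have hx : δ * (4*Real.sqrt n) < 1 := (lt_div_iff₀ h4s).mp hδ1
    have hs2 : Real.sqrt n ^ 2 = (n:ℝ) := Real.sq_sqrt hn0.le
    nlinarith [hx, hs2, mul_pos hδ0 h4s]
  have hnt : ((n - t : ℕ) : ℝ) ≤ (n:ℝ) := by
    exact_mod_cast (by omega : n - t ≤ n)
  have hB4 : (3:ℝ)/4 ≤ 1 + ((n-t:ℕ):ℝ) * (-(4*u^2)) := by
    have hq : ((n-t:ℕ):ℝ) * (4*u^2) ≤ (n:ℝ) * (4*δ^2) := by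
      apply mul_le_mul hnt (by nlinarith) (by positivity) (by positivity)
    nlinarith [hδsq]
  have hBfinal : (3:ℝ)/4 ≤ (1+2*u)^(t-1) * (1-2*u)^(n-t) := by linarith
  have hsplit : ξ^(t-1) * (1-ξ)^(n-t)
      = ((1+2*u)^(t-1) * (1-2*u)^(n-t)) * ((1:ℝ)/2)^(n-1) := by
    rw [h1ξ, hξval, div_pow, div_pow]
    rw [show ((1:ℝ)/2)^(n-1) = 1/2^(n-1) by rw [div_pow]; norm_num]
    rw [← hab', pow_add]
    field_simp
  have hterm : (3:ℝ)/4 * ((1:ℝ)/2)^(n-1) ≤ ξ^(t-1) * (1-ξ)^(n-t) := by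
    rw [hsplit]
    apply mul_le_mul_of_nonneg_right hBfinal (by positivity)
  have het : t - 1 = n/2 := by omega
  have hch := choose_half n (by omega)
  have hphi : 3/8 * Real.sqrt n ≤ phi n ξ t := by
    have hchpos : (0:ℝ) ≤ (2:ℝ)^(n-1) / (2 * Real.sqrt n) := by positivity
    have hCterm : ((2:ℝ)^(n-1)/(2*Real.sqrt n)) * ((3:ℝ)/4 * ((1:ℝ)/2)^(n-1))
        ≤ ((n-1).choose (n/2) : ℝ) * (ξ^(t-1) * (1-ξ)^(n-t)) :=
      mul_le_mul hch hterm (by positivity) (le_trans hchpos hch)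
    have hfull := mul_le_mul_of_nonneg_left hCterm hn0.le
    have hcomp : (n:ℝ) * (((2:ℝ)^(n-1)/(2*Real.sqrt n)) * ((3:ℝ)/4 * ((1:ℝ)/2)^(n-1)))
        = 3/8 * ((n:ℝ)/Real.sqrt n) := by
      rw [show ((1:ℝ)/2)^(n-1) = 1/2^(n-1) by rw [div_pow]; norm_num]
      field_simp
      ring
    rw [hcomp, Real.div_sqrt] at hfull
    calc 3/8 * Real.sqrt n ≤ (n:ℝ) * (((n-1).choose (n/2) : ℝ) * (ξ^(t-1) * (1-ξ)^(n-t))) :=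
          hfull
      _ = phi n ξ t := by
          simp only [phi, het]
          ring
  -- final chain
  rw [ge_iff_le, hflip]
  have hAs : ∑ y ∈ A, (prodDist n P y - (1/2:ℝ)^n)
      = ∑ y ∈ A, prodDist n P y - ∑ y ∈ A, ((1:ℝ)/2)^n := Finset.sum_sub_distrib _ _
  have hδphi : δ * (3/8 * Real.sqrt n) ≤ δ * phi n ξ t :=
    mul_le_mul_of_nonneg_left hphi hδ0.le
  have hlast : δ * Real.sqrt n / 16 ≤ δ * (3/8 * Real.sqrt n) := by
    nlinarith [mul_nonneg hδ0.le hsn.le]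
  linarith [hhalf, hmono, hFq, hFhalf, hFdiff, hAs]
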